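/- Let $\lambda, \vartheta > 0$, $\rho \in (0,1)$, $k_V = 1/\vartheta$, and define $h(\zeta) = -\frac{1}{\vartheta}\log(1 + \vartheta\zeta) + \lambda\big(1 - \sqrt{1 - 2\zeta/(\lambda\rho)}\big)$ for $\zeta \in (-1/\vartheta, \lambda\rho/2)$. Set $\gamma = \rho/(\lambda\vartheta)$ and $\zeta_{sp} = \frac{1}{\vartheta}\big(\sqrt{(\gamma+1)^2 - (1-\rho^2)} - \gamma - 1\big)$. Then $\zeta_{sp}$ lies in $(-1/\vartheta, 0]$ and $h'(\zeta_{sp}) = 0$. -/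

import Mathlib

theorem stmt11 (lam θ ρ : ℝ) (hlam : 0 < lam) (hθ : 0 < θ) (hρ : ρ ∈ Set.Ioo (0:ℝ) 1) :
    let h : ℝ → ℝ := fun ζ =>
      -(1/θ) * Real.log (1 + θ * ζ) + lam * (1 - Real.sqrt (1 - 2*ζ/(lam*ρ)))
    let γ := ρ / (lam * θ)
    let ζsp := (Real.sqrt ((γ+1)^2 - (1 - ρ^2)) - γ - 1) / θ
    ζsp ∈ Set.Ioc (-(1/θ)) 0 ∧ deriv h ζsp = 0 := by
  intro h γ ζsp
  obtain ⟨hρ0, hρ1⟩ := hρ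
  have hl := hlam.ne'
  have ht := hθ.ne'
  have hγ : 0 < γ := div_pos hρ0 (mul_pos hlam hθ)
  have hA : (0:ℝ) < (γ+1)^2 - (1 - ρ^2) := by nlinarith
  set S := Real.sqrt ((γ+1)^2 - (1 - ρ^2)) with hSdef
  have hS2 : S^2 = (γ+1)^2 - (1 - ρ^2) := Real.sq_sqrt hA.le
  have hS0 : 0 ≤ S := Real.sqrt_nonneg _
  have hSγ : γ < S := by nlinarith
  have hSlt : S < γ + 1 := by nlinarith
  have hθζ : 1 + θ * ζsp = S - γ := by
    show 1 + θ * ((S - γ - 1) / θ) = S - γ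
    field_simp
    ring
  have hSγ0 : 0 < S - γ := by linarith
  have hx : 1 - 2*ζsp/(lam*ρ) = ((S - γ)/ρ)^2 := by
    show 1 - 2*((S - ρ/(lam*θ) - 1) / θ)/(lam*ρ) = ((S - ρ/(lam*θ))/ρ)^2
    have hS2' : S^2 = (ρ/(lam*θ)+1)^2 - (1 - ρ^2) := hS2
    field_simp at hS2' ⊢
    linear_combination (-1) * hS2'
  have hsq : Real.sqrt (1 - 2*ζsp/(lam*ρ)) = (S - γ)/ρ := by
    rw [hx, Real.sqrt_sq (by positivity)]
  have hxpos : 0 < 1 - 2*ζsp/(lam*ρ) := by rw [hx]; positivity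
  constructor
  · constructor
    · show -(1/θ) < (S - γ - 1) / θ
      rw [show -(1/θ) = (-1)/θ by ring]
      exact div_lt_div_of_pos_right (by linarith) hθ
    · show (S - γ - 1) / θ ≤ 0
      exact div_nonpos_of_nonpos_of_nonneg (by linarith) hθ.le
  · have hinner : HasDerivAt (fun ζ : ℝ => 1 - 2*ζ/(lam*ρ)) (-(2/(lam*ρ))) ζsp := by
      simpa using ((hasDerivAt_id' (x := ζsp)).const_mul 2).div_const (lam*ρ) |>.const_sub 1
    have hsqrt : HasDerivAt (fun ζ : ℝ => Real.sqrt (1 - 2*ζ/(lam*ρ)))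
        (1 / (2 * Real.sqrt (1 - 2*ζsp/(lam*ρ))) * (-(2/(lam*ρ)))) ζsp :=
      (Real.hasDerivAt_sqrt hxpos.ne').comp ζsp hinner
    have hlin : HasDerivAt (fun ζ : ℝ => 1 + θ * ζ) θ ζsp := by
      simpa using ((hasDerivAt_id' (x := ζsp)).const_mul θ).const_add 1
    have hlog : HasDerivAt (fun ζ : ℝ => Real.log (1 + θ * ζ))
        ((1 + θ * ζsp)⁻¹ * θ) ζsp :=
      (Real.hasDerivAt_log (by rw [hθζ]; exact hSγ0.ne')).comp ζsp hlin
    have hh : HasDerivAt h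
        (-(1/θ) * ((1 + θ * ζsp)⁻¹ * θ) +
          lam * (-(1 / (2 * Real.sqrt (1 - 2*ζsp/(lam*ρ))) * (-(2/(lam*ρ)))))) ζsp :=
      (hlog.const_mul (-(1/θ))).add ((hsqrt.const_sub 1).const_mul lam)
    rw [hh.deriv, hθζ, hsq]
    have hρne : ρ ≠ 0 := hρ0.ne'
    field_simp
    ring
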